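/- Let n > k be positive integers and let B^n = {0,1}^n ⊂ ℝ^n be the Boolean cube. For any k-dimensional affine subspace Γ ⊂ ℝ^n, the number of points a ∈ B^n whose Euclidean distance to Γ is strictly less than (1/4)·n^{-1/2}·(n-k)^{-1/2} is at most 2^{k+1}. -/

import Mathlib

open Real Matrix Module

lemma sum_abs_le_sqrt {k n : ℕ} (σ : Fin k → Fin n) (hσ : Function.Injective σ)
    (f : Fin n → ℝ) :
    ∑ i, |f (σ i)| ≤ Real.sqrt k * Real.sqrt (∑ j, f j ^ 2) := by
  have h1 : (∑ i, |f (σ i)|) ^ 2 ≤ (k : ℝ) * ∑ i, |f (σ i)| ^ 2 := by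
    simpa using sq_sum_le_card_mul_sum_sq (s := Finset.univ) (f := fun i => |f (σ i)|)
  have h2 : ∑ i, |f (σ i)| ^ 2 ≤ ∑ j, f j ^ 2 := by
    calc ∑ i, |f (σ i)| ^ 2 = ∑ j ∈ Finset.univ.image σ, f j ^ 2 := by
          rw [Finset.sum_image (fun x _ y _ h => hσ h)]; simp [sq_abs]
      _ ≤ ∑ j, f j ^ 2 := Finset.sum_le_sum_of_subset_of_nonneg
          (Finset.subset_univ _) (fun _ _ _ => sq_nonneg _)
  calc ∑ i, |f (σ i)| = Real.sqrt ((∑ i, |f (σ i)|) ^ 2) := by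
        rw [Real.sqrt_sq (Finset.sum_nonneg fun _ _ => abs_nonneg _)]
    _ ≤ Real.sqrt ((k : ℝ) * ∑ j, f j ^ 2) := by
        apply Real.sqrt_le_sqrt
        exact h1.trans (mul_le_mul_of_nonneg_left h2 (Nat.cast_nonneg k))
    _ = Real.sqrt k * Real.sqrt (∑ j, f j ^ 2) := Real.sqrt_mul (Nat.cast_nonneg k) _

lemma exists_max_submatrix {n k : ℕ} (M : Matrix (Fin n) (Fin k) ℝ)
    (σ₀ : Fin k → Fin n) (h0 : (M.submatrix σ₀ id).det ≠ 0) :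
    ∃ σ : Fin k → Fin n, (M.submatrix σ id).det ≠ 0 ∧
      ∀ τ : Fin k → Fin n, |(M.submatrix τ id).det| ≤ |(M.submatrix σ id).det| := by
  obtain ⟨σ, -, hmax⟩ := Finset.exists_max_image (Finset.univ : Finset (Fin k → Fin n))
    (fun τ => |(M.submatrix τ id).det|) ⟨σ₀, Finset.mem_univ _⟩
  refine ⟨σ, fun h => ?_, fun τ => hmax τ (Finset.mem_univ _)⟩
  have := hmax σ₀ (Finset.mem_univ _)
  rw [h] at this
  simp only [abs_zero] at this
  exact h0 (abs_eq_zero.mp (le_antisymm this (abs_nonneg _)))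

lemma row_combo {n k : ℕ} (M : Matrix (Fin n) (Fin k) ℝ) (σ : Fin k → Fin n)
    (hdet : (M.submatrix σ id).det ≠ 0)
    (hmax : ∀ τ : Fin k → Fin n, |(M.submatrix τ id).det| ≤ |(M.submatrix σ id).det|)
    (j : Fin n) :
    ∃ c : Fin k → ℝ, (∀ i, |c i| ≤ 1) ∧
      ∀ x : Fin k → ℝ, M.mulVec x j = ∑ i, c i * M.mulVec x (σ i) := by
  classical
  set A := M.submatrix σ id with hA
  refine ⟨fun i => (A.updateRow i (M j)).det / A.det, fun i => ?_, fun x => ?_⟩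
  · rw [abs_div]
    rw [div_le_one (abs_pos.mpr hdet)]
    have : A.updateRow i (M j) = M.submatrix (Function.update σ i j) id := by
      ext i' l
      by_cases h : i' = i <;>
        simp [h, Matrix.updateRow_apply, Function.update_apply, hA]
    rw [this]
    exact hmax _
  · have key : ∀ l, (∑ i, (A.updateRow i (M j)).det / A.det * A i l) = M j l := by
      intro l
      have h1 := congrFun (Matrix.mulVec_cramer Aᵀ (M j)) l
      simp only [Matrix.mulVec, dotProduct, Matrix.cramer_transpose_apply,
        Matrix.transpose_apply, Matrix.det_transpose, Pi.smul_apply, smul_eq_mul] at h1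
      have : ∑ i, (A.updateRow i (M j)).det / A.det * A i l
          = (∑ i, A i l * (A.updateRow i (M j)).det) / A.det := by
        rw [Finset.sum_div]
        congr 1; ext i; ring
      rw [this, h1]
      field_simp
    calc M.mulVec x j = ∑ l, M j l * x l := rfl
      _ = ∑ l, (∑ i, (A.updateRow i (M j)).det / A.det * A i l) * x l := by
          simp_rw [key]
      _ = ∑ i, (A.updateRow i (M j)).det / A.det * ∑ l, A i l * x l := by
          simp_rw [Finset.sum_mul, Finset.mul_sum]
          rw [Finset.sum_comm]
          refine Finset.sum_congr rfl fun i _ => Finset.sum_congr rfl fun l _ => by ring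
      _ = ∑ i, (A.updateRow i (M j)).det / A.det * M.mulVec x (σ i) := rfl

lemma exists_submatrix_det_ne_zero {n k : ℕ} (M : Matrix (Fin n) (Fin k) ℝ)
    (hM : Function.Injective M.mulVec) :
    ∃ σ : Fin k → Fin n, (M.submatrix σ id).det ≠ 0 := by
  classical
  have hrank : M.rank = k := by
    have : Function.Injective M.mulVecLin := by
      rwa [Matrix.coe_mulVecLin]
    rw [Matrix.rank, LinearMap.finrank_range_of_inj this, Module.finrank_pi]
    simp
  have hspan : Submodule.span ℝ (Set.range M) = ⊤ := by
    apply Submodule.eq_top_of_finrank_eq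
    rw [show Submodule.span ℝ (Set.range M) = Submodule.span ℝ (Set.range M.row) from rfl,
      ← Matrix.rank_eq_finrank_span_row, hrank, Module.finrank_pi]
    simp
  obtain ⟨b, hbsub, hbspan, hbli⟩ := exists_linearIndependent ℝ (Set.range M)
  rw [hspan] at hbspan
  have hbfin : b.Finite := (Set.finite_range M).subset hbsub
  have : Fintype b := hbfin.fintype
  let B : Basis b ℝ (Fin k → ℝ) := Basis.mk hbli (by rw [Subtype.range_coe, hbspan])
  have hcard : Fintype.card b = k := by
    have := Module.finrank_eq_card_basis B
    rw [Module.finrank_pi] at this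
    simpa using this.symm
  let e : Fin k ≃ b := (Fintype.equivFinOfCardEq hcard).symm
  have hpre : ∀ i : Fin k, ∃ j : Fin n, M j = (e i : Fin k → ℝ) := fun i => hbsub (e i).2
  choose σ hσ using hpre
  refine ⟨σ, ?_⟩
  have hli : LinearIndependent ℝ (fun i : Fin k => (M.submatrix σ id) i) := by
    have : (fun i : Fin k => (M.submatrix σ id) i) = fun i => ((e i : Fin k → ℝ)) := by
      funext i
      ext l
      simp only [Matrix.submatrix_apply, id_eq]
      rw [hσ i]
    rw [this]
    exact hbli.comp e e.injective
  have := Matrix.linearIndependent_rows_iff_isUnit.mp hli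
  rw [Matrix.isUnit_iff_isUnit_det, isUnit_iff_ne_zero] at this
  exact this

lemma numeric_bound {n k : ℕ} (hk : 0 < k) (hkn : k < n) :
    2 * (1 + Real.sqrt k) *
      ((1 / 4) * (n : ℝ) ^ (-(1 : ℝ) / 2) * ((n - k : ℕ) : ℝ) ^ (-(1 : ℝ) / 2)) < 1 := by
  have hrpow : ∀ x : ℝ, 0 ≤ x → x ^ (-(1 : ℝ) / 2) = (Real.sqrt x)⁻¹ := by
    intro x hx
    rw [neg_div, Real.rpow_neg hx, Real.sqrt_eq_rpow]
  rw [hrpow _ (Nat.cast_nonneg n), hrpow _ (Nat.cast_nonneg _)]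
  have hm1 : (1 : ℝ) ≤ ((n - k : ℕ) : ℝ) := by
    have : 1 ≤ n - k := by omega
    exact_mod_cast this
  have hms : (Real.sqrt ((n - k : ℕ) : ℝ))⁻¹ ≤ 1 := by
    rw [inv_le_one_iff₀]
    right
    exact Real.one_le_sqrt.mpr hm1
  have hkn' : ((k : ℝ) + 1) ≤ (n : ℝ) := by exact_mod_cast hkn
  have hsk1 : (0 : ℝ) < Real.sqrt ((k : ℝ) + 1) := Real.sqrt_pos.mpr (by positivity)
  have hns : (Real.sqrt (n : ℝ))⁻¹ ≤ (Real.sqrt ((k : ℝ) + 1))⁻¹ := by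
    apply inv_anti₀ hsk1
    exact Real.sqrt_le_sqrt hkn'
  have key : 1 + Real.sqrt k < 2 * Real.sqrt ((k : ℝ) + 1) := by
    have h1 : Real.sqrt k ^ 2 = (k : ℝ) := Real.sq_sqrt (Nat.cast_nonneg k)
    have h2 : Real.sqrt ((k : ℝ) + 1) ^ 2 = (k : ℝ) + 1 := Real.sq_sqrt (by positivity)
    have h3 : 2 * Real.sqrt k ≤ (k : ℝ) + 1 := by nlinarith [sq_nonneg (Real.sqrt k - 1)]
    have h4 : (1 + Real.sqrt k) ^ 2 < (2 * Real.sqrt ((k : ℝ) + 1)) ^ 2 := by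
      rw [mul_pow, h2]
      nlinarith [Real.sqrt_nonneg (k : ℝ)]
    exact lt_of_pow_lt_pow_left₀ 2 (by positivity) h4
  calc 2 * (1 + Real.sqrt k) *
        ((1 / 4) * (Real.sqrt (n : ℝ))⁻¹ * (Real.sqrt ((n - k : ℕ) : ℝ))⁻¹)
      ≤ 2 * (1 + Real.sqrt k) * ((1 / 4) * (Real.sqrt ((k : ℝ) + 1))⁻¹ * 1) := by
        gcongr
    _ = (1 + Real.sqrt k) / (2 * Real.sqrt ((k : ℝ) + 1)) := by
        field_simp
        ring
    _ < 1 := by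
        rw [div_lt_one (by positivity)]
        exact key

lemma coord_abs_le_dist {n : ℕ} (x y : EuclideanSpace ℝ (Fin n)) (j : Fin n) :
    |x j - y j| ≤ dist x y := by
  rw [EuclideanSpace.dist_eq]
  rw [← Real.sqrt_sq_eq_abs]
  apply Real.sqrt_le_sqrt
  have : (x j - y j) ^ 2 = dist (x j) (y j) ^ 2 := by
    rw [Real.dist_eq, sq_abs]
  rw [this]
  exact Finset.single_le_sum (f := fun i => dist (x i) (y i) ^ 2)
    (fun i _ => sq_nonneg _) (Finset.mem_univ j)

lemma sqrt_sum_eq_dist {n : ℕ} (x y : EuclideanSpace ℝ (Fin n)) :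
    Real.sqrt (∑ j, (x j - y j) ^ 2) = dist x y := by
  rw [EuclideanSpace.dist_eq]
  congr 1
  exact Finset.sum_congr rfl fun j _ => by rw [Real.dist_eq, sq_abs]

theorem boolean_cube_affine_intersection
    (n k : ℕ) (hk : 0 < k) (hkn : k < n)
    (Γ₀ : Submodule ℝ (EuclideanSpace ℝ (Fin n)))
    (hdim : Module.finrank ℝ Γ₀ = k)
    (a₀ : EuclideanSpace ℝ (Fin n)) :
    Set.ncard {a : EuclideanSpace ℝ (Fin n) |
        (∀ i, a i = 0 ∨ a i = 1) ∧
        Metric.infDist a ((a₀ + ·) '' (Γ₀ : Set (EuclideanSpace ℝ (Fin n)))) <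
          (1 / 4) * (n : ℝ) ^ (-(1 : ℝ) / 2) * ((n - k : ℕ) : ℝ) ^ (-(1 : ℝ) / 2)}
      ≤ 2 ^ (k + 1) := by
  classical
  set ε : ℝ := (1 / 4) * (n : ℝ) ^ (-(1 : ℝ) / 2) * ((n - k : ℕ) : ℝ) ^ (-(1 : ℝ) / 2) with hε
  have hεsmall : 2 * (1 + Real.sqrt k) * ε < 1 := numeric_bound hk hkn
  have hΓne : ((a₀ + ·) '' (Γ₀ : Set (EuclideanSpace ℝ (Fin n)))).Nonempty :=
    ⟨a₀ + 0, ⟨0, Γ₀.zero_mem, rfl⟩⟩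
  -- basis and matrix
  let bΓ : Basis (Fin k) ℝ Γ₀ := Module.finBasisOfFinrankEq ℝ Γ₀ hdim
  let M : Matrix (Fin n) (Fin k) ℝ := fun j i => ((bΓ i : EuclideanSpace ℝ (Fin n)) j)
  have hrep : ∀ (v : Γ₀) (j : Fin n),
      (v : EuclideanSpace ℝ (Fin n)) j = M.mulVec (bΓ.repr v) j := by
    intro v j
    conv_lhs => rw [← bΓ.sum_repr v]
    have : ((↑(∑ i, bΓ.repr v i • bΓ i) : EuclideanSpace ℝ (Fin n))) j
        = ∑ i, bΓ.repr v i * M j i := by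
      rw [Submodule.coe_sum]
      rw [WithLp.ofLp_sum, Finset.sum_apply]
      simp [M, PiLp.smul_apply, smul_eq_mul]
    rw [this]
    simp [Matrix.mulVec, dotProduct, mul_comm]
  have hinj : Function.Injective M.mulVec := by
    intro x y hxy
    have h0 : M.mulVec (x - y) = 0 := by
      rw [Matrix.mulVec_sub, hxy, sub_self]
    have hz : ∑ i, (x - y) i • (bΓ i : EuclideanSpace ℝ (Fin n)) = 0 := by
      ext j
      have := congrFun h0 j
      simp [Matrix.mulVec, dotProduct] at this
      calc (∑ i, (x - y) i • (bΓ i : EuclideanSpace ℝ (Fin n))) j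
          = ∑ i, (x - y) i * M j i := by
            rw [WithLp.ofLp_sum, Finset.sum_apply]; simp [M, smul_eq_mul]
        _ = 0 := by rw [← this]; exact Finset.sum_congr rfl fun i _ => mul_comm _ _
    have hli : LinearIndependent ℝ (fun i => (bΓ i : EuclideanSpace ℝ (Fin n))) :=
      bΓ.linearIndependent.map' Γ₀.subtype (Submodule.ker_subtype Γ₀)
    have h := Fintype.linearIndependent_iff.mp hli (x - y) hz
    funext i
    simpa [sub_eq_zero] using h i
  obtain ⟨σ₁, hσ₁⟩ := exists_submatrix_det_ne_zero M hinj
  obtain ⟨σ, hdet, hmax⟩ := exists_max_submatrix M σ₁ hσ₁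
  have hσinj : Function.Injective σ := by
    intro i1 i2 h12
    by_contra hne
    apply hdet
    apply Matrix.det_zero_of_row_eq hne
    funext l
    simp [Matrix.submatrix_apply, h12]
  -- injectivity on the set
  have hinjOn : Set.InjOn (fun (a : EuclideanSpace ℝ (Fin n)) (i : Fin k) =>
      decide (a (σ i) = 1)) {a : EuclideanSpace ℝ (Fin n) |
        (∀ i, a i = 0 ∨ a i = 1) ∧
        Metric.infDist a ((a₀ + ·) '' (Γ₀ : Set (EuclideanSpace ℝ (Fin n)))) < ε} := by
    intro a ha b hb hfeq
    have hS : ∀ i, a (σ i) = b (σ i) := by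
      intro i
      have h := congrFun hfeq i
      simp only at h
      rcases ha.1 (σ i) with h1 | h1 <;> rcases hb.1 (σ i) with h2 | h2 <;>
        rw [h1, h2] <;> simp [h1, h2] at h ⊢ <;> norm_num at h
    obtain ⟨ga, hgaΓ, hga⟩ := (Metric.infDist_lt_iff hΓne).mp ha.2
    obtain ⟨gb, hgbΓ, hgb⟩ := (Metric.infDist_lt_iff hΓne).mp hb.2
    obtain ⟨wa, hwa, rfl⟩ := hgaΓ
    obtain ⟨wb, hwb, rfl⟩ := hgbΓ
    simp only at hga hgb
    have hv : wa - wb ∈ Γ₀ := Γ₀.sub_mem hwa hwb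
    set v : EuclideanSpace ℝ (Fin n) := wa - wb with hvdef
    have hεpos : 0 < ε := by
      nlinarith [Real.sqrt_nonneg (k : ℝ), Metric.infDist_nonneg.trans_lt ha.2,
        Metric.infDist_nonneg (s := ((a₀ + ·) '' (Γ₀ : Set (EuclideanSpace ℝ (Fin n)))))
          (x := a)]
    -- sum bound on the σ coordinates of v
    have hsum : ∑ i, |v (σ i)| ≤ Real.sqrt k * (dist a (a₀ + wa) + dist b (a₀ + wb)) := by
      have hterm : ∀ i, |v (σ i)| ≤
          |a (σ i) - (a₀ + wa) (σ i)| + |b (σ i) - (a₀ + wb) (σ i)| := by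
        intro i
        have hval : v (σ i) = ((a₀ + wa) (σ i) - a (σ i)) - ((a₀ + wb) (σ i) - b (σ i)) := by
          have h1 : (a₀ + wa) (σ i) = a₀ (σ i) + wa (σ i) := rfl
          have h2 : (a₀ + wb) (σ i) = a₀ (σ i) + wb (σ i) := rfl
          have h3 : v (σ i) = wa (σ i) - wb (σ i) := rfl
          rw [h1, h2, h3, hS i]
          ring
        rw [hval]
        calc |((a₀ + wa) (σ i) - a (σ i)) - ((a₀ + wb) (σ i) - b (σ i))|
            ≤ |(a₀ + wa) (σ i) - a (σ i)| + |(a₀ + wb) (σ i) - b (σ i)| := abs_sub _ _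
          _ = |a (σ i) - (a₀ + wa) (σ i)| + |b (σ i) - (a₀ + wb) (σ i)| := by
              rw [abs_sub_comm, abs_sub_comm ((a₀ + wb) (σ i))]
      calc ∑ i, |v (σ i)|
          ≤ ∑ i, (|a (σ i) - (a₀ + wa) (σ i)| + |b (σ i) - (a₀ + wb) (σ i)|) :=
            Finset.sum_le_sum fun i _ => hterm i
        _ = (∑ i, |a (σ i) - (a₀ + wa) (σ i)|) + ∑ i, |b (σ i) - (a₀ + wb) (σ i)| :=
            Finset.sum_add_distrib
        _ ≤ Real.sqrt k * Real.sqrt (∑ j, (a j - (a₀ + wa) j) ^ 2)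
            + Real.sqrt k * Real.sqrt (∑ j, (b j - (a₀ + wb) j) ^ 2) := by
            gcongr ?_ + ?_
            · exact sum_abs_le_sqrt σ hσinj (fun j' => a j' - (a₀ + wa) j')
            · exact sum_abs_le_sqrt σ hσinj (fun j' => b j' - (a₀ + wb) j')
        _ = Real.sqrt k * (dist a (a₀ + wa) + dist b (a₀ + wb)) := by
            rw [sqrt_sum_eq_dist, sqrt_sum_eq_dist]
            ring
    -- coordinatewise conclusion
    ext j
    obtain ⟨c, hc1, hc2⟩ := row_combo M σ hdet hmax j
    have hvrep : ∀ j', v j' = M.mulVec (bΓ.repr ⟨v, hv⟩) j' := fun j' => hrep ⟨v, hv⟩ j'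
    have hvj : v j = ∑ i, c i * v (σ i) := by
      rw [hvrep j, hc2]
      exact Finset.sum_congr rfl fun i _ => by rw [hvrep (σ i)]
    have hvjabs : |v j| ≤ ∑ i, |v (σ i)| := by
      rw [hvj]
      calc |∑ i, c i * v (σ i)| ≤ ∑ i, |c i * v (σ i)| := Finset.abs_sum_le_sum_abs _ _
        _ ≤ ∑ i, |v (σ i)| := Finset.sum_le_sum fun i _ => by
            rw [abs_mul]
            exact mul_le_of_le_one_left (abs_nonneg _) (hc1 i)
    have hdecomp : a j - b j = (a j - (a₀ + wa) j) + v j + ((a₀ + wb) j - b j) := by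
      have h1 : (a₀ + wa) j = a₀ j + wa j := rfl
      have h2 : (a₀ + wb) j = a₀ j + wb j := rfl
      have h3 : v j = wa j - wb j := rfl
      rw [h1, h2, h3]
      ring
    have habs : |a j - b j| < 1 := by
      have h1 : |a j - (a₀ + wa) j| ≤ dist a (a₀ + wa) := coord_abs_le_dist _ _ j
      have h2 : |(a₀ + wb) j - b j| ≤ dist b (a₀ + wb) := by
        rw [abs_sub_comm]
        exact coord_abs_le_dist _ _ j
      have h3 : |a j - b j| ≤ dist a (a₀ + wa) + |v j| + dist b (a₀ + wb) := by
        rw [hdecomp]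
        calc |(a j - (a₀ + wa) j) + v j + ((a₀ + wb) j - b j)|
            ≤ |a j - (a₀ + wa) j| + |v j| + |(a₀ + wb) j - b j| := by
              exact (abs_add_le _ _).trans (by gcongr; exact abs_add_le _ _)
          _ ≤ dist a (a₀ + wa) + |v j| + dist b (a₀ + wb) := by gcongr
      have h4 : |v j| ≤ Real.sqrt k * (dist a (a₀ + wa) + dist b (a₀ + wb)) :=
        hvjabs.trans hsum
      have hsq : (0:ℝ) ≤ Real.sqrt k := Real.sqrt_nonneg _
      calc |a j - b j| ≤ dist a (a₀ + wa) + |v j| + dist b (a₀ + wb) := h3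
        _ ≤ dist a (a₀ + wa) + Real.sqrt k * (dist a (a₀ + wa) + dist b (a₀ + wb))
            + dist b (a₀ + wb) := by gcongr
        _ < ε + Real.sqrt k * (ε + ε) + ε := by
            have hda := hga
            have hdb := hgb
            have : Real.sqrt k * (dist a (a₀ + wa) + dist b (a₀ + wb))
                ≤ Real.sqrt k * (ε + ε) := by
              apply mul_le_mul_of_nonneg_left _ hsq
              exact add_le_add hga.le hgb.le
            nlinarith
        _ = 2 * (1 + Real.sqrt k) * ε := by ring
        _ < 1 := hεsmall
    rcases ha.1 j with h1 | h1 <;> rcases hb.1 j with h2 | h2 <;> rw [h1, h2] <;>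
      (try rfl) <;> (exfalso; rw [h1, h2] at habs; norm_num at habs)
  calc Set.ncard {a : EuclideanSpace ℝ (Fin n) |
        (∀ i, a i = 0 ∨ a i = 1) ∧
        Metric.infDist a ((a₀ + ·) '' (Γ₀ : Set (EuclideanSpace ℝ (Fin n)))) < ε}
      ≤ (Set.univ : Set (Fin k → Bool)).ncard :=
        Set.ncard_le_ncard_of_injOn _ (fun a _ => Set.mem_univ _) hinjOn Set.finite_univ
    _ = 2 ^ k := by
        rw [Set.ncard_univ, Nat.card_eq_fintype_card]
        simp
    _ ≤ 2 ^ (k + 1) := Nat.pow_le_pow_right (by norm_num) (Nat.le_succ k)
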